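/- Let g ∈ C[0,1] and Ψ(g) = argmax_{p∈[0,1]} g(p) (nonempty by compactness and continuity). For the functional S(h) = max_{p∈[0,1]} h(p) and any sequences t_n → 0⁺, h_n → h uniformly, one has (S(g + t_n h_n) - S(g))/t_n → sup_{p ∈ Ψ(g)} h(p). -/

import Mathlib

open Set Filter

lemma exists_max_csSup17 {s : Set ℝ} (hs : IsCompact s) (hne : s.Nonempty)
    {f : ℝ → ℝ} (hf : ContinuousOn f s) :
    ∃ x ∈ s, sSup (f '' s) = f x ∧ ∀ y ∈ s, f y ≤ f x := by
  obtain ⟨x, hx, hmax⟩ := hs.exists_isMaxOn hne hf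
  refine ⟨x, hx, ?_, fun y hy => hmax hy⟩
  exact IsGreatest.csSup_eq ⟨Set.mem_image_of_mem f hx,
    by rintro y ⟨a, ha, rfl⟩; exact hmax ha⟩

theorem stmt17 (g h : ℝ → ℝ) (hg : ContinuousOn g (Set.Icc 0 1))
    (hh : ContinuousOn h (Set.Icc 0 1))
    (t : ℕ → ℝ) (ht : ∀ n, 0 < t n)
    (ht0 : Filter.Tendsto t Filter.atTop (nhds 0))
    (hn : ℕ → ℝ → ℝ) (hhn : ∀ n, ContinuousOn (hn n) (Set.Icc 0 1))
    (hunif : TendstoUniformlyOn hn h Filter.atTop (Set.Icc 0 1)) :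
    Filter.Tendsto (fun n =>
        (sSup ((fun p => g p + t n * hn n p) '' Set.Icc (0 : ℝ) 1) -
          sSup (g '' Set.Icc (0 : ℝ) 1)) / t n) Filter.atTop
      (nhds (sSup (h '' {p ∈ Set.Icc (0 : ℝ) 1 | g p = sSup (g '' Set.Icc (0 : ℝ) 1)}))) := by
  set I : Set ℝ := Set.Icc (0:ℝ) 1 with hIdef
  have hIc : IsCompact I := isCompact_Icc
  have hIne : I.Nonempty := ⟨0, by simp [hIdef]⟩
  set M := sSup (g '' I) with hMdef
  obtain ⟨x0, hx0I, hx0, hx0max⟩ := exists_max_csSup17 hIc hIne hg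
  have hgM : ∀ y ∈ I, g y ≤ M := by
    intro y hy; rw [hMdef, hx0]; exact hx0max y hy
  set Ψ : Set ℝ := {p ∈ I | g p = M} with hΨdef
  have hΨsub : Ψ ⊆ I := fun p hp => hp.1
  have hΨne : Ψ.Nonempty := ⟨x0, hx0I, hx0.symm⟩
  have hΨc : IsCompact Ψ := by
    have hcl : IsClosed (I ∩ g ⁻¹' {M}) :=
      hg.preimage_isClosed_of_isClosed isClosed_Icc isClosed_singleton
    have : Ψ = I ∩ g ⁻¹' {M} := by ext p; simp [hΨdef, Set.mem_sep_iff, and_comm]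
    rw [this]
    exact hIc.of_isClosed_subset hcl Set.inter_subset_left
  obtain ⟨ps, hpsΨ, hLs, hpsmax⟩ := exists_max_csSup17 hΨc hΨne (hh.mono hΨsub)
  rw [hLs]
  set L := h ps with hLdef
  -- maximum of h on I
  obtain ⟨b, hbI, -, hbmax⟩ := exists_max_csSup17 hIc hIne hh
  set B := h b with hBdef
  have hLB : L ≤ B := hbmax ps (hΨsub hpsΨ)
  -- maximizers of fn n
  have hfn : ∀ n, ContinuousOn (fun p => g p + t n * hn n p) I :=
    fun n => hg.add (continuousOn_const.mul (hhn n))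
  have hex : ∀ n, ∃ x ∈ I, sSup ((fun p => g p + t n * hn n p) '' I)
      = g x + t n * hn n x ∧ ∀ y ∈ I, g y + t n * hn n y ≤ g x + t n * hn n x :=
    fun n => exists_max_csSup17 hIc hIne (hfn n)
  choose p hpI hpS hpmax using hex
  rw [Metric.tendsto_nhds]
  intro ε hε
  -- key: a threshold τ
  have key : ∃ τ > 0, ∀ n, t n < τ → ∀ q ∈ I, hn n q < h q + ε/2 →
      (g q - M)/ t n + hn n q < L + ε := by
    set A : Set ℝ := {q ∈ I | L + ε/2 ≤ h q} with hAdef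
    have base : ∀ n, ∀ q ∈ I, hn n q < h q + ε/2 → h q < L + ε/2 →
        (g q - M)/ t n + hn n q < L + ε := by
      intro n q hqI hq1 hq2
      have h1 : g q ≤ M := hgM q hqI
      have h2 : (g q - M) / t n ≤ 0 := by
        rw [div_nonpos_iff]; right; exact ⟨by linarith, (ht n).le⟩
      linarith
    rcases A.eq_empty_or_nonempty with hAe | hAne
    · refine ⟨1, one_pos, fun n _ q hqI hq1 => ?_⟩
      have : q ∉ A := by rw [hAe]; exact Set.notMem_empty q
      have hq2 : h q < L + ε/2 := by
        by_contra hcon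
        exact this ⟨hqI, le_of_not_gt hcon⟩
      exact base n q hqI hq1 hq2
    · have hAc : IsCompact A := by
        have hcl : IsClosed (I ∩ h ⁻¹' Set.Ici (L + ε/2)) :=
          hh.preimage_isClosed_of_isClosed isClosed_Icc isClosed_Ici
        have : A = I ∩ h ⁻¹' Set.Ici (L + ε/2) := by
          ext q; simp [hAdef, Set.mem_sep_iff]
        rw [this]
        exact hIc.of_isClosed_subset hcl Set.inter_subset_left
      have hAsub : A ⊆ I := fun q hq => hq.1
      obtain ⟨a, haA, -, hamax⟩ := exists_max_csSup17 hAc hAne (hg.mono hAsub)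
      have hδpos : 0 < M - g a := by
        have h1 : g a ≤ M := hgM a (hAsub haA)
        rcases lt_or_eq_of_le h1 with hlt | heq
        · linarith
        · exfalso
          have haΨ : a ∈ Ψ := ⟨hAsub haA, heq⟩
          have := hpsmax a haΨ
          have := haA.2
          linarith
      refine ⟨(M - g a) / (B - L + 1), div_pos hδpos (by linarith), fun n htn q hqI hq1 => ?_⟩
      by_cases hq2 : h q < L + ε/2
      · exact base n q hqI hq1 hq2
      · have hqA : q ∈ A := ⟨hqI, le_of_not_gt hq2⟩
        have hga : g q ≤ g a := hamax q hqA
        have h7 : (B - L + 1) * ((M - g a) / (B - L + 1)) = M - g a := by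
          rw [mul_comm, div_mul_cancel₀ _ (by linarith : B - L + 1 ≠ 0)]
        have hdiv : B - L + 1 < (M - g a) / t n := by
          rw [lt_div_iff₀ (ht n)]
          calc (B - L + 1) * t n < (B - L + 1) * ((M - g a) / (B - L + 1)) := by
                apply mul_lt_mul_of_pos_left htn (by linarith)
            _ = M - g a := h7
        have h3 : (g q - M) / t n ≤ (g a - M) / t n :=
          div_le_div_of_nonneg_right (by linarith) (ht n).le
        have h4 : (g a - M) / t n = -((M - g a) / t n) := by ring
        have h5 : hn n q < B + ε/2 := by
          have := hbmax q hqI; linarith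
        have h6 : (g q - M) / t n < -(B - L + 1) := by
          rw [h4] at h3; linarith
        linarith
  obtain ⟨τ, hτ, hkey⟩ := key
  have Ev1 : ∀ᶠ n in atTop, ∀ x ∈ I, dist (h x) (hn n x) < ε/2 :=
    Metric.tendstoUniformlyOn_iff.1 hunif (ε/2) (by positivity)
  have Ev2 : ∀ᶠ n in atTop, t n < τ := ht0.eventually (gt_mem_nhds hτ)
  filter_upwards [Ev1, Ev2] with n h1 h2
  have htn := ht n
  have htne : t n ≠ 0 := ne_of_gt htn
  rw [hpS n]
  set q := (g (p n) + t n * hn n (p n) - M) / t n with hqdef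
  have hqeq : q = (g (p n) - M) / t n + hn n (p n) := by
    field_simp [hqdef]; rw [hqdef, div_mul_cancel₀ _ htne]; ring
  -- upper bound
  have hup : q < L + ε := by
    rw [hqeq]
    apply hkey n h2 (p n) (hpI n)
    have := h1 (p n) (hpI n)
    rw [Real.dist_eq, abs_lt] at this
    linarith [this.1]
  -- lower bound
  have hlow : L - ε < q := by
    have hmax := hpmax n ps (hΨsub hpsΨ)
    have hgps : g ps = M := hpsΨ.2
    have h5 : (g ps + t n * hn n ps - M) / t n = hn n ps := by
      rw [hgps]; field_simp; ring
    have h6 : (g ps + t n * hn n ps - M) / t n ≤ q := by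
      apply div_le_div_of_nonneg_right (by linarith) htn.le
    rw [h5] at h6
    have := h1 ps (hΨsub hpsΨ)
    rw [Real.dist_eq, abs_lt] at this
    have : L - ε/2 < hn n ps := by linarith [this.1, this.2]
    linarith
  rw [Real.dist_eq, abs_lt]
  constructor <;> linarith
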